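/- arXiv:2301.09979 — 4 statements merged into one kernel-verified Lean document; each statement's English description precedes it below -/
import Mathlib

section
/- For every odd integer Δ ≥ 3 there exists a finite simple isolate-free graph G with maximum degree Δ(G) = Δ and a total coalition partition of G with at least (Δ+1)(Δ+3)/4 = Δ²/4 + Δ + 3/4 classes; hence TC(G) ≥ (Δ+1)(Δ+3)/4. -/
open scoped Classical

variable {V : Type*}

/-- `S` is a total dominating set of `G`: every vertex of `G` has a neighbor in `S`. -/
def TotalDomSet (G : SimpleGraph V) (S : Finset V) : Prop :=
  ∀ v : V, ∃ u ∈ S, G.Adj v u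

/-- Two disjoint sets `A`, `B` form a total coalition in `G` if neither is a total
dominating set but their union is. -/
def TotalCoalition [DecidableEq V] (G : SimpleGraph V) (A B : Finset V) : Prop :=
  Disjoint A B ∧ ¬ TotalDomSet G A ∧ ¬ TotalDomSet G B ∧ TotalDomSet G (A ∪ B)

/-- A graph is isolate-free if every vertex has a neighbor. -/
def IsolateFree (G : SimpleGraph V) : Prop :=
  ∀ v : V, ∃ u : V, G.Adj v u

/-- `Ψ` is a total coalition partition of `G`: a partition of the vertex set into
nonempty classes, none of which is a total dominating set, such that every class
forms a total coalition with at least one other class. -/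
def IsTCPartition [DecidableEq V] (G : SimpleGraph V) (Ψ : Finset (Finset V)) : Prop :=
  (∀ C ∈ Ψ, C.Nonempty) ∧
  (∀ v : V, ∃! C, C ∈ Ψ ∧ v ∈ C) ∧
  (∀ C ∈ Ψ, ¬ TotalDomSet G C) ∧
  (∀ C ∈ Ψ, ∃ D ∈ Ψ, D ≠ C ∧ TotalCoalition G C D)

/-- The total coalition graph `TCG(G,Ψ)`: vertices are the classes of `Ψ`, and two
classes are adjacent iff they form a total coalition. -/
def TCG [DecidableEq V] (G : SimpleGraph V) (Ψ : Finset (Finset V)) :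
    SimpleGraph {C // C ∈ Ψ} where
  Adj C D := C ≠ D ∧ TotalCoalition G (C : Finset V) (D : Finset V)
  symm := ⟨by
    rintro C D ⟨hne, hd, hA, hB, hU⟩
    exact ⟨hne.symm, hd.symm, hB, hA, by rwa [Finset.union_comm]⟩⟩
  loopless := ⟨by rintro C ⟨hne, _⟩; exact hne rfl⟩

namespace TCCon

abbrev Vt (k : ℕ) : Type := Fin (k+1) ⊕ (Fin (k+1) × Fin (k+1)) ⊕ (Fin (k+1) × Fin (2*k+2))

def R (k : ℕ) : Vt k → Vt k → Bool
  | Sum.inl i, Sum.inl i' => i != i'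
  | Sum.inl i, Sum.inr (Sum.inl (i', _)) => i == i'
  | Sum.inr (Sum.inl (i, j)), Sum.inr (Sum.inr (i', t)) => (i != i') && (t.val == j.val)
  | Sum.inr (Sum.inr (i, t)), Sum.inr (Sum.inr (i', t')) =>
      ((i != i') && (t == t')) || ((i == i') && ((t.val + (k+1)) % (2*k+2) == t'.val))
  | _, _ => false

lemma mod_shift (k t : ℕ) (ht : t < 2*k+2) :
    (t + (k+1)) % (2*k+2) = if t < k+1 then t + (k+1) else t - (k+1) := by
  split
  · exact Nat.mod_eq_of_lt (by omega)
  · rw [Nat.mod_eq_sub_mod (by omega), show t + (k+1) - (2*k+2) = t - (k+1) by omega,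
      Nat.mod_eq_of_lt (by omega)]

lemma R_irrefl {k : ℕ} (x : Vt k) : R k x x = false := by
  rcases x with i | ⟨i,j⟩ | ⟨i,t⟩ <;> simp [R]
  rw [mod_shift k t.val t.isLt]
  have := t.isLt
  split <;> omega

def Gr (k : ℕ) : SimpleGraph (Vt k) where
  Adj x y := (R k x y || R k y x) = true
  symm := ⟨fun x y h => by rwa [Bool.or_comm] at h⟩
  loopless := ⟨fun x h => by simp [R_irrefl] at h⟩

instance (k : ℕ) : DecidableRel (Gr k).Adj := fun _ _ =>
  inferInstanceAs (Decidable (_ = true))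

lemma gr_adj {k : ℕ} (x y : Vt k) : (Gr k).Adj x y ↔ (R k x y = true ∨ R k y x = true) := by
  simp [Gr]

def M (k : ℕ) (t : Fin (2*k+2)) : Fin (2*k+2) :=
  ⟨(t.val + (k+1)) % (2*k+2), Nat.mod_lt _ (by omega)⟩

variable {k : ℕ}

lemma M_inv {t t' : Fin (2*k+2)} (h : (t'.val + (k+1)) % (2*k+2) = t.val) : t' = M k t := by
  have h1 := mod_shift k t'.val t'.isLt
  have h2 := mod_shift k t.val t.isLt
  apply Fin.ext
  show t'.val = (t.val + (k+1)) % (2*k+2)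
  rw [h1] at h; rw [h2]
  have := t.isLt; have := t'.isLt
  split at h <;> split <;> omega

lemma adj_WW {i i' : Fin (k+1)} (h : i ≠ i') : (Gr k).Adj (Sum.inl i) (Sum.inl i') := by
  rw [gr_adj]; left; simp [R, h]

lemma adj_WS (i : Fin (k+1)) (j : Fin (k+1)) :
    (Gr k).Adj (Sum.inl i) (Sum.inr (Sum.inl (i, j))) := by
  rw [gr_adj]; left; simp [R]

lemma adj_SU {i i' : Fin (k+1)} (j : Fin (k+1)) (t : Fin (2*k+2)) (h : i ≠ i')
    (ht : t.val = j.val) :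
    (Gr k).Adj (Sum.inr (Sum.inl (i, j))) (Sum.inr (Sum.inr (i', t))) := by
  rw [gr_adj]; left; simp [R, h, ht]

lemma adj_UU_cross {i i' : Fin (k+1)} (t : Fin (2*k+2)) (h : i ≠ i') :
    (Gr k).Adj (Sum.inr (Sum.inr (i, t))) (Sum.inr (Sum.inr (i', t))) := by
  rw [gr_adj]; left; simp [R, h]

lemma adj_UU_match (i : Fin (k+1)) (t : Fin (2*k+2)) :
    (Gr k).Adj (Sum.inr (Sum.inr (i, t))) (Sum.inr (Sum.inr (i, M k t))) := by
  rw [gr_adj]; left; simp [R, M]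

/-- the big classes -/
def Bcl (k : ℕ) (i : Fin (k+1)) : Finset (Vt k) :=
  insert (Sum.inl i) (Finset.univ.image fun t : Fin (2*k+2) => Sum.inr (Sum.inr (i, t)))

/-- the singleton classes -/
def Scl (k : ℕ) (i j : Fin (k+1)) : Finset (Vt k) := {Sum.inr (Sum.inl (i, j))}

lemma mem_Bcl {i : Fin (k+1)} {x : Vt k} :
    x ∈ Bcl k i ↔ x = Sum.inl i ∨ ∃ t, x = Sum.inr (Sum.inr (i, t)) := by
  simp [Bcl, eq_comm]

lemma singleton_not_TD (x : Vt k) : ¬ TotalDomSet (Gr k) {x} := by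
  intro h
  obtain ⟨u, hu, hadj⟩ := h x
  simp at hu
  subst hu
  exact (Gr k).loopless.irrefl _ hadj

lemma Bcl_not_TD (i : Fin (k+1)) : ¬ TotalDomSet (Gr k) (Bcl k i) := by
  intro h
  obtain ⟨u, hu, hadj⟩ := h (Sum.inl i)
  rw [mem_Bcl] at hu
  rcases hu with rfl | ⟨t, rfl⟩
  · exact (Gr k).loopless.irrefl _ hadj
  · rw [gr_adj] at hadj
    simp [R] at hadj

lemma union_TD (i j : Fin (k+1)) : TotalDomSet (Gr k) (Bcl k i ∪ Scl k i j) := by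
  intro v
  rcases v with i' | ⟨i', j'⟩ | ⟨i', t⟩
  · by_cases h : i' = i
    · subst h
      exact ⟨Sum.inr (Sum.inl (i', j)), by simp [Scl], adj_WS i' j⟩
    · exact ⟨Sum.inl i, by simp [mem_Bcl], adj_WW h⟩
  · by_cases h : i' = i
    · subst h
      exact ⟨Sum.inl i', by simp [mem_Bcl], ((Gr k).adj_symm (adj_WS i' j'))⟩
    · refine ⟨Sum.inr (Sum.inr (i, ⟨j'.val, by omega⟩)), ?_, adj_SU j' _ h rfl⟩
      simp [mem_Bcl]
  · by_cases h : i' = i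
    · subst h
      exact ⟨Sum.inr (Sum.inr (i', M k t)), by simp [mem_Bcl], adj_UU_match i' t⟩
    · exact ⟨Sum.inr (Sum.inr (i, t)), by simp [mem_Bcl], adj_UU_cross t h⟩

lemma isolate_free : ∀ v : Vt k, ∃ u, (Gr k).Adj v u := by
  rintro (i | ⟨i, j⟩ | ⟨i, t⟩)
  · exact ⟨_, adj_WS i 0⟩
  · exact ⟨_, (Gr k).adj_symm (adj_WS i j)⟩
  · exact ⟨_, adj_UU_match i t⟩

end TCCon

namespace TCCon
variable {k : ℕ}

lemma Bcl_ne_Scl (i i' j' : Fin (k+1)) : Bcl k i ≠ Scl k i' j' := by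
  intro h
  have : (Sum.inl i : Vt k) ∈ Scl k i' j' := h ▸ (by simp [mem_Bcl])
  simp [Scl] at this

lemma Bcl_inj {i i' : Fin (k+1)} (h : Bcl k i = Bcl k i') : i = i' := by
  have : (Sum.inl i : Vt k) ∈ Bcl k i' := h ▸ (by simp [mem_Bcl])
  rw [mem_Bcl] at this
  rcases this with h' | ⟨t, h'⟩
  · exact (Sum.inl.inj h')
  · simp at h'

lemma Scl_inj {i j i' j' : Fin (k+1)} (h : Scl k i j = Scl k i' j') : i = i' ∧ j = j' := by
  have : (Sum.inr (Sum.inl (i, j)) : Vt k) ∈ Scl k i' j' := h ▸ (by simp [Scl])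
  simp [Scl] at this
  exact this

/-- the partition -/
def Psi (k : ℕ) : Finset (Finset (Vt k)) :=
  (Finset.univ.image (Bcl k)) ∪
    ((Finset.univ ×ˢ Finset.univ).image fun p : Fin (k+1) × Fin (k+1) => Scl k p.1 p.2)

lemma mem_Psi {C : Finset (Vt k)} :
    C ∈ Psi k ↔ (∃ i, C = Bcl k i) ∨ ∃ i j, C = Scl k i j := by
  simp [Psi, eq_comm]

lemma card_Psi : (Psi k).card = (k+1) + (k+1)*(k+1) := by
  rw [Psi, Finset.card_union_of_disjoint, Finset.card_image_of_injective _
      (fun a b h => Bcl_inj h), Finset.card_image_of_injective]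
  · simp
  · intro p q h
    obtain ⟨h1, h2⟩ := Scl_inj h
    exact Prod.ext h1 h2
  · simp only [Finset.disjoint_left, Finset.mem_image]
    rintro C ⟨i, -, rfl⟩ ⟨p, -, h⟩
    exact Bcl_ne_Scl i p.1 p.2 h.symm

lemma exists_unique_class (v : Vt k) : ∃! C, C ∈ Psi k ∧ v ∈ C := by
  rcases v with i | ⟨i, j⟩ | ⟨i, t⟩
  · refine ⟨Bcl k i, ⟨mem_Psi.2 (Or.inl ⟨i, rfl⟩), by simp [mem_Bcl]⟩, ?_⟩
    rintro D ⟨hD, hvD⟩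
    rw [mem_Psi] at hD
    rcases hD with ⟨i', rfl⟩ | ⟨i', j', rfl⟩
    · rw [mem_Bcl] at hvD
      rcases hvD with h | ⟨t, h⟩
      · cases h; rfl
      · simp at h
    · simp [Scl] at hvD
  · refine ⟨Scl k i j, ⟨mem_Psi.2 (Or.inr ⟨i, j, rfl⟩), by simp [Scl]⟩, ?_⟩
    rintro D ⟨hD, hvD⟩
    rw [mem_Psi] at hD
    rcases hD with ⟨i', rfl⟩ | ⟨i', j', rfl⟩
    · rw [mem_Bcl] at hvD
      rcases hvD with h | ⟨t, h⟩ <;> simp at h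
    · simp [Scl] at hvD
      obtain ⟨rfl, rfl⟩ := hvD
      rfl
  · refine ⟨Bcl k i, ⟨mem_Psi.2 (Or.inl ⟨i, rfl⟩), by simp [mem_Bcl]⟩, ?_⟩
    rintro D ⟨hD, hvD⟩
    rw [mem_Psi] at hD
    rcases hD with ⟨i', rfl⟩ | ⟨i', j', rfl⟩
    · rw [mem_Bcl] at hvD
      rcases hvD with h | ⟨t', h⟩
      · simp at h
      · simp at h
        rw [h.1]
    · simp [Scl] at hvD

lemma disj_BS (i j : Fin (k+1)) : Disjoint (Bcl k i) (Scl k i j) := by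
  simp only [Finset.disjoint_right, Scl, Finset.mem_singleton]
  rintro x rfl
  rw [mem_Bcl]
  rintro (h | ⟨t, h⟩) <;> simp at h

lemma coalition_BS (i j : Fin (k+1)) :
    TotalCoalition (Gr k) (Bcl k i) (Scl k i j) :=
  ⟨disj_BS i j, Bcl_not_TD i, singleton_not_TD _, union_TD i j⟩

lemma classes_nonempty {C : Finset (Vt k)} (h : C ∈ Psi k) : C.Nonempty := by
  rw [mem_Psi] at h
  rcases h with ⟨i, rfl⟩ | ⟨i, j, rfl⟩
  · exact ⟨Sum.inl i, by simp [mem_Bcl]⟩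
  · exact ⟨Sum.inr (Sum.inl (i, j)), by simp [Scl]⟩

end TCCon

namespace TCCon
variable {k : ℕ}

lemma nbrW (i : Fin (k+1)) :
    (Gr k).neighborFinset (Sum.inl i) =
      ((Finset.univ.erase i).image Sum.inl) ∪
        (Finset.univ.image fun j : Fin (k+1) => Sum.inr (Sum.inl (i, j))) := by
  ext y
  rw [SimpleGraph.mem_neighborFinset, gr_adj]
  rcases y with i' | ⟨i', j'⟩ | ⟨i', t⟩
  · simp [R]
    intro h h'
    exact h h'.symm
  · simp [R]
  · simp [R]

lemma degW (i : Fin (k+1)) : (Gr k).degree (Sum.inl i) = 2*k+1 := by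
  rw [SimpleGraph.degree, nbrW, Finset.card_union_of_disjoint, Finset.card_image_of_injective _
    Sum.inl_injective, Finset.card_image_of_injective, Finset.card_erase_of_mem (by simp)]
  · simp; ring
  · intro a b h; simpa using h
  · simp only [Finset.disjoint_left, Finset.mem_image]
    rintro x ⟨a, -, rfl⟩ ⟨b, -, h⟩
    simp at h

lemma degS_le (i j : Fin (k+1)) : (Gr k).degree (Sum.inr (Sum.inl (i, j))) ≤ 2*k+1 := by
  rw [SimpleGraph.degree]
  have hsub : (Gr k).neighborFinset (Sum.inr (Sum.inl (i, j))) ⊆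
      insert (Sum.inl i) ((Finset.univ.erase i).image fun i' : Fin (k+1) =>
        (Sum.inr (Sum.inr (i', (⟨j.val, by omega⟩ : Fin (2*k+2)))) : Vt k)) := by
    intro y hy
    rw [SimpleGraph.mem_neighborFinset, gr_adj] at hy
    rcases y with i'' | ⟨i'', j''⟩ | ⟨i'', t⟩
    · simp only [R, Bool.or_eq_true, bne_iff_ne, beq_iff_eq, Bool.false_eq_true,
        false_or] at hy
      subst hy
      simp
    · simp [R] at hy
    · simp only [R, Bool.or_eq_true, Bool.and_eq_true, bne_iff_ne, beq_iff_eq,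
        Bool.false_eq_true, or_false] at hy
      obtain ⟨h1, h2⟩ := hy
      simp only [Finset.mem_insert, Finset.mem_image, Finset.mem_erase, Finset.mem_univ,
        and_true]
      right
      refine ⟨i'', fun hh => h1 hh.symm, ?_⟩
      have ht : (⟨j.val, by omega⟩ : Fin (2*k+2)) = t := Fin.ext h2.symm
      rw [ht]
  calc ((Gr k).neighborFinset (Sum.inr (Sum.inl (i, j)))).card
      ≤ _ := Finset.card_le_card hsub
    _ ≤ ((Finset.univ.erase i).image fun i' : Fin (k+1) =>
        (Sum.inr (Sum.inr (i', (⟨j.val, by omega⟩ : Fin (2*k+2)))) : Vt k)).card + 1 :=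
      Finset.card_insert_le _ _
    _ ≤ (Finset.univ.erase i).card + 1 := by
      gcongr
      exact Finset.card_image_le
    _ ≤ 2*k+1 := by
      rw [Finset.card_erase_of_mem (Finset.mem_univ _)]
      simp only [Finset.card_univ, Fintype.card_fin]
      omega

lemma degU_le (i : Fin (k+1)) (t : Fin (2*k+2)) :
    (Gr k).degree (Sum.inr (Sum.inr (i, t))) ≤ 2*k+1 := by
  rw [SimpleGraph.degree]
  have hsub : (Gr k).neighborFinset (Sum.inr (Sum.inr (i, t))) ⊆
      (((Finset.univ.erase i).image fun i' : Fin (k+1) => (Sum.inr (Sum.inr (i', t)) : Vt k)) ∪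
       ((Finset.univ.erase i).image fun i'' : Fin (k+1) =>
          (Sum.inr (Sum.inl (i'', (⟨min t.val k, by omega⟩ : Fin (k+1)))) : Vt k))) ∪
      {Sum.inr (Sum.inr (i, M k t))} := by
    intro y hy
    rw [SimpleGraph.mem_neighborFinset, gr_adj] at hy
    rcases y with i'' | ⟨i'', j''⟩ | ⟨i', t'⟩
    · simp [R] at hy
    · simp only [R, Bool.or_eq_true, Bool.and_eq_true, bne_iff_ne, beq_iff_eq,
        Bool.false_eq_true, false_or] at hy
      obtain ⟨h1, h2⟩ := hy
      simp only [Finset.mem_union, Finset.mem_image, Finset.mem_erase, Finset.mem_univ,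
        and_true, Finset.mem_singleton]
      left; right
      refine ⟨i'', h1, ?_⟩
      have hj : j'' = (⟨min t.val k, by omega⟩ : Fin (k+1)) := by
        apply Fin.ext
        have := j''.isLt
        simp only []
        omega
      rw [hj]
    · simp only [R, Bool.or_eq_true, Bool.and_eq_true, bne_iff_ne, beq_iff_eq] at hy
      simp only [Finset.mem_union, Finset.mem_image, Finset.mem_erase, Finset.mem_univ,
        and_true, Finset.mem_singleton]
      rcases hy with (⟨h1, h2⟩ | ⟨h1, h2⟩) | (⟨h1, h2⟩ | ⟨h1, h2⟩)
      · subst h2; left; left; exact ⟨i', fun hh => h1 hh.symm, rfl⟩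
      · subst h1
        right
        have ht' : t' = M k t := Fin.ext h2.symm
        rw [ht']
      · subst h2; left; left; exact ⟨i', h1, rfl⟩
      · subst h1
        right
        rw [M_inv h2]
  calc ((Gr k).neighborFinset (Sum.inr (Sum.inr (i, t)))).card
      ≤ _ := Finset.card_le_card hsub
    _ ≤ ((((Finset.univ.erase i).image fun i' : Fin (k+1) =>
            (Sum.inr (Sum.inr (i', t)) : Vt k)) ∪
          ((Finset.univ.erase i).image fun i'' : Fin (k+1) =>
            (Sum.inr (Sum.inl (i'', (⟨min t.val k, by omega⟩ : Fin (k+1)))) : Vt k))).card) + 1 :=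
      le_trans (Finset.card_union_le _ _) (by simp)
    _ ≤ (((Finset.univ.erase i).image fun i' : Fin (k+1) =>
            (Sum.inr (Sum.inr (i', t)) : Vt k)).card +
          ((Finset.univ.erase i).image fun i'' : Fin (k+1) =>
            (Sum.inr (Sum.inl (i'', (⟨min t.val k, by omega⟩ : Fin (k+1)))) : Vt k)).card) + 1 := by
      gcongr
      exact Finset.card_union_le _ _
    _ ≤ ((Finset.univ.erase i).card + (Finset.univ.erase i).card) + 1 := by
      gcongr <;> exact Finset.card_image_le
    _ ≤ 2*k+1 := by
      rw [Finset.card_erase_of_mem (Finset.mem_univ _)]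
      simp only [Finset.card_univ, Fintype.card_fin]
      omega

end TCCon

namespace TCCon
variable {k : ℕ}

lemma class_not_TD {C : Finset (Vt k)} (h : C ∈ Psi k) : ¬ TotalDomSet (Gr k) C := by
  rw [mem_Psi] at h
  rcases h with ⟨i, rfl⟩ | ⟨i, j, rfl⟩
  · exact Bcl_not_TD i
  · exact singleton_not_TD _

lemma coalition_SB (i j : Fin (k+1)) :
    TotalCoalition (Gr k) (Scl k i j) (Bcl k i) :=
  ⟨(disj_BS i j).symm, singleton_not_TD _, Bcl_not_TD i, by
    rw [Finset.union_comm]; exact union_TD i j⟩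

end TCCon

section Transport

lemma td_map {α β : Type*} [Fintype α] [Fintype β] [DecidableEq α] [DecidableEq β]
    (H : SimpleGraph β) (e : β ≃ α) (C : Finset β) :
    TotalDomSet (H.comap ⇑e.symm) (C.map e.toEmbedding) ↔ TotalDomSet H C := by
  constructor
  · intro h w
    obtain ⟨u, hu, ha⟩ := h (e w)
    rw [Finset.mem_map_equiv] at hu
    refine ⟨e.symm u, hu, ?_⟩
    have : H.Adj (e.symm (e w)) (e.symm u) := ha
    simpa using this
  · intro h v
    obtain ⟨u, hu, ha⟩ := h (e.symm v)
    refine ⟨e u, ?_, ?_⟩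
    · rw [Finset.mem_map_equiv]; simpa using hu
    · show H.Adj (e.symm v) (e.symm (e u))
      simpa using ha

lemma coal_map {α β : Type*} [Fintype α] [Fintype β] [DecidableEq α] [DecidableEq β]
    (H : SimpleGraph β) (e : β ≃ α) (A B : Finset β) (h : TotalCoalition H A B) :
    TotalCoalition (H.comap ⇑e.symm) (A.map e.toEmbedding) (B.map e.toEmbedding) := by
  obtain ⟨hd, hA, hB, hU⟩ := h
  refine ⟨(Finset.disjoint_map _).2 hd, ?_, ?_, ?_⟩
  · rw [td_map]; exact hA
  · rw [td_map]; exact hB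
  · rw [← Finset.map_union, td_map]; exact hU

lemma deg_map {α β : Type*} [Fintype α] [Fintype β] [DecidableEq α] [DecidableEq β]
    (H : SimpleGraph β) (e : β ≃ α) [DecidableRel H.Adj]
    [DecidableRel (H.comap ⇑e.symm).Adj] (v : α) :
    (H.comap ⇑e.symm).degree v = H.degree (e.symm v) := by
  have hn : (H.comap ⇑e.symm).neighborFinset v =
      (H.neighborFinset (e.symm v)).map e.toEmbedding := by
    ext u
    rw [Finset.mem_map_equiv]
    simp only [SimpleGraph.mem_neighborFinset, SimpleGraph.comap_adj]
  rw [SimpleGraph.degree, SimpleGraph.degree, hn, Finset.card_map]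

end Transport

namespace TCCon

variable (k : ℕ)

/-- the number of vertices -/
def nn (k : ℕ) : ℕ := Fintype.card (Vt k)

/-- the equivalence with `Fin (nn k)` -/
noncomputable def ee (k : ℕ) : Vt k ≃ Fin (nn k) := Fintype.equivFin _

/-- the graph on `Fin (nn k)` -/
noncomputable def Gn (k : ℕ) : SimpleGraph (Fin (nn k)) := (Gr k).comap ⇑(ee k).symm

noncomputable instance : DecidableRel (Gn k).Adj := fun a b =>
  inferInstanceAs (Decidable ((Gr k).Adj ((ee k).symm a) ((ee k).symm b)))

/-- the transported class map -/
noncomputable def cln (k : ℕ) : Finset (Vt k) → Finset (Fin (nn k)) := fun C => C.map (ee k).toEmbedding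

lemma cln_inj : Function.Injective (cln k) := Finset.map_injective (ee k).toEmbedding

/-- the transported partition -/
noncomputable def Psin (k : ℕ) : Finset (Finset (Fin (nn k))) := (Psi k).image (cln k)

lemma mem_Psin {D : Finset (Fin (nn k))} : D ∈ Psin k ↔ ∃ C ∈ Psi k, cln k C = D := by
  simp [Psin]

end TCCon

/-- For every odd `Δ ≥ 3` there is a finite isolate-free graph `G` with maximum degree
`Δ` admitting a total coalition partition with at least `(Δ+1)(Δ+3)/4` classes. -/
theorem statement_7 (Δ : ℕ) (hΔ : 3 ≤ Δ) (hodd : Odd Δ) :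
    ∃ (n : ℕ) (G : SimpleGraph (Fin n)) (_ : DecidableRel G.Adj)
      (Ψ : Finset (Finset (Fin n))),
      IsolateFree G ∧ G.maxDegree = Δ ∧ IsTCPartition G Ψ ∧
      (Δ + 1) * (Δ + 3) / 4 ≤ Ψ.card := by
  classical
  obtain ⟨k, rfl⟩ := hodd
  refine ⟨TCCon.nn k, TCCon.Gn k, inferInstance, TCCon.Psin k, ?_, ?_, ⟨?_, ?_, ?_, ?_⟩, ?_⟩
  · -- isolate-free
    intro v
    obtain ⟨u, hu⟩ := TCCon.isolate_free ((TCCon.ee k).symm v)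
    refine ⟨(TCCon.ee k) u, ?_⟩
    show (TCCon.Gr k).Adj ((TCCon.ee k).symm v) ((TCCon.ee k).symm ((TCCon.ee k) u))
    simpa using hu
  · -- max degree
    apply le_antisymm
    · apply SimpleGraph.maxDegree_le_of_forall_degree_le
      intro v
      have hd : (TCCon.Gn k).degree v = (TCCon.Gr k).degree ((TCCon.ee k).symm v) :=
        deg_map _ _ v
      rw [hd]
      rcases hsv : (TCCon.ee k).symm v with i | ⟨i, j⟩ | ⟨i, t⟩
      · exact le_of_eq (TCCon.degW i)
      · exact TCCon.degS_le i j
      · exact TCCon.degU_le i t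
    · have hdeg : (TCCon.Gn k).degree ((TCCon.ee k) (Sum.inl (0 : Fin (k+1)))) = 2*k+1 := by
        have hd : (TCCon.Gn k).degree ((TCCon.ee k) (Sum.inl (0 : Fin (k+1)))) =
            (TCCon.Gr k).degree ((TCCon.ee k).symm ((TCCon.ee k) (Sum.inl 0))) :=
          deg_map _ _ _
        rw [hd, Equiv.symm_apply_apply]
        exact TCCon.degW 0
      calc 2*k+1 = (TCCon.Gn k).degree ((TCCon.ee k) (Sum.inl (0 : Fin (k+1)))) := hdeg.symm
        _ ≤ (TCCon.Gn k).maxDegree := SimpleGraph.degree_le_maxDegree _ _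
  · -- nonempty classes
    intro C hC
    obtain ⟨C', hC', rfl⟩ := (TCCon.mem_Psin k).1 hC
    rw [show TCCon.cln k C' = C'.map (TCCon.ee k).toEmbedding from rfl, Finset.map_nonempty]
    exact TCCon.classes_nonempty hC'
  · -- partition property
    intro v
    obtain ⟨C0, ⟨hC0, hv0⟩, huniq⟩ := TCCon.exists_unique_class ((TCCon.ee k).symm v)
    refine ⟨TCCon.cln k C0, ⟨(TCCon.mem_Psin k).2 ⟨C0, hC0, rfl⟩, ?_⟩, ?_⟩
    · rw [show TCCon.cln k C0 = C0.map (TCCon.ee k).toEmbedding from rfl, Finset.mem_map_equiv]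
      exact hv0
    · rintro D ⟨hD, hvD⟩
      obtain ⟨D', hD', rfl⟩ := (TCCon.mem_Psin k).1 hD
      rw [show TCCon.cln k D' = D'.map (TCCon.ee k).toEmbedding from rfl, Finset.mem_map_equiv] at hvD
      rw [huniq D' ⟨hD', hvD⟩]
  · -- no class is TD
    intro C hC h
    obtain ⟨C', hC', rfl⟩ := (TCCon.mem_Psin k).1 hC
    exact TCCon.class_not_TD hC' ((td_map (TCCon.Gr k) (TCCon.ee k) C').1 h)
  · -- coalitions
    intro C hC
    obtain ⟨C', hC', rfl⟩ := (TCCon.mem_Psin k).1 hC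
    rw [TCCon.mem_Psi] at hC'
    rcases hC' with ⟨i, rfl⟩ | ⟨i, j, rfl⟩
    · refine ⟨TCCon.cln k (TCCon.Scl k i 0),
        (TCCon.mem_Psin k).2 ⟨_, TCCon.mem_Psi.2 (Or.inr ⟨i, 0, rfl⟩), rfl⟩, ?_, ?_⟩
      · intro h
        exact TCCon.Bcl_ne_Scl i i 0 (TCCon.cln_inj k h).symm
      · exact coal_map _ _ _ _ (TCCon.coalition_BS i 0)
    · refine ⟨TCCon.cln k (TCCon.Bcl k i),
        (TCCon.mem_Psin k).2 ⟨_, TCCon.mem_Psi.2 (Or.inl ⟨i, rfl⟩), rfl⟩, ?_, ?_⟩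
      · intro h
        exact TCCon.Bcl_ne_Scl i i j (TCCon.cln_inj k h)
      · exact coal_map _ _ _ _ (TCCon.coalition_SB i j)
  · -- cardinality
    have hcard : (TCCon.Psin k).card = (k+1) + (k+1)*(k+1) := by
      rw [TCCon.Psin, Finset.card_image_of_injective _ (TCCon.cln_inj k), TCCon.card_Psi]
    rw [hcard]
    have h4 : (2*k+1+1) * (2*k+1+3) = 4 * ((k+1) + (k+1)*(k+1)) := by ring
    rw [h4, Nat.mul_div_cancel_left _ (by norm_num : (0:ℕ) < 4)]
end

section
/- Let G be a finite simple isolate-free graph whose maximum degree Δ = Δ(G) is odd. Then TC(G) ≤ (Δ+1)(Δ+3)/4, i.e., every total coalition partition of G has at most ((Δ+1)/2)·((Δ+3)/2) classes. -/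
open scoped Classical

variable {V : Type*}

/-- If `Δ(G)` is odd, every total coalition partition of the isolate-free graph `G`
has at most `(Δ(G)+1)(Δ(G)+3)/4` classes. -/
theorem statement_9 [Fintype V] [DecidableEq V]
    (G : SimpleGraph V) [DecidableRel G.Adj] (hG : IsolateFree G)
    (hodd : Odd G.maxDegree)
    (Ψ : Finset (Finset V)) (hΨ : IsTCPartition G Ψ) :
    Ψ.card ≤ (G.maxDegree + 1) * (G.maxDegree + 3) / 4 := by
  classical
  obtain ⟨hne, huniq, hnd, hpart⟩ := hΨ
  rcases Finset.eq_empty_or_nonempty Ψ with hΨe | hΨne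
  · simp [hΨe]
  set Δ := G.maxDegree with hΔdef
  -- each vertex lies in a unique class
  have hclass : ∀ {x : V} {C C' : Finset V}, C ∈ Ψ → C' ∈ Ψ → x ∈ C → x ∈ C' → C = C' := by
    intro x C C' hC hC' hx hx'
    obtain ⟨B, hB, hBu⟩ := huniq x
    rw [hBu C ⟨hC, hx⟩, hBu C' ⟨hC', hx'⟩]
  -- the classes containing a neighbor of w
  set Dw : V → Finset (Finset V) := fun w => Ψ.filter (fun C => ∃ x ∈ C, G.Adj w x)
    with hDwdef
  have hDw_card : ∀ w : V, (Dw w).card ≤ Δ := by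
    intro w
    have h1 : (Dw w).card ≤ (G.neighborFinset w).card := by
      apply Finset.card_le_card_of_injOn
        (fun C => if h : ∃ x ∈ C, G.Adj w x then h.choose else w)
      · intro C hC
        simp only [hDwdef, Finset.mem_coe, Finset.mem_filter] at hC
        simp only [Finset.mem_coe]
        rw [dif_pos hC.2]
        simpa [SimpleGraph.mem_neighborFinset] using hC.2.choose_spec.2
      · intro C hC C' hC' hEq
        simp only [hDwdef, Finset.mem_coe, Finset.mem_filter] at hC hC'
        dsimp only at hEq
        rw [dif_pos hC.2, dif_pos hC'.2] at hEq
        have h1 := hC.2.choose_spec.1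
        have h2 := hC'.2.choose_spec.1
        rw [hEq] at h1
        exact hclass hC.1 hC'.1 h1 h2
    refine h1.trans ?_
    rw [SimpleGraph.card_neighborFinset_eq_degree]
    exact G.degree_le_maxDegree w
  -- partner function
  have hpfex : ∀ C : Finset V, ∃ D', C ∈ Ψ → D' ∈ Ψ ∧ D' ≠ C ∧ TotalCoalition G C D' := by
    intro C
    by_cases h : C ∈ Ψ
    · obtain ⟨D', hD', hne', hco⟩ := hpart C h
      exact ⟨D', fun _ => ⟨hD', hne', hco⟩⟩
    · exact ⟨∅, fun h' => absurd h' h⟩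
  choose pf hpf using hpfex
  -- matchings of coalition pairs
  set IsM : Finset (Finset V × Finset V) → Prop := fun M =>
    (∀ p ∈ M, p.1 ∈ Ψ ∧ p.2 ∈ Ψ ∧ p.1 ≠ p.2 ∧ TotalDomSet G (p.1 ∪ p.2)) ∧
    (∀ p ∈ M, ∀ q ∈ M, p ≠ q → p.1 ≠ q.1 ∧ p.1 ≠ q.2 ∧ p.2 ≠ q.1 ∧ p.2 ≠ q.2)
    with hIsMdef
  have hM0 : IsM ∅ := by
    constructor
    · intro p hp; simp at hp
    · intro p hp; simp at hp
  obtain ⟨M, hMmem, hMmax'⟩ := Finset.exists_max_image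
    (Finset.univ.filter IsM) Finset.card ⟨∅, Finset.mem_filter.2 ⟨Finset.mem_univ _, hM0⟩⟩
  have hM : IsM M := (Finset.mem_filter.1 hMmem).2
  have hmax : ∀ M', IsM M' → M'.card ≤ M.card := by
    intro M' h
    exact hMmax' M' (Finset.mem_filter.2 ⟨Finset.mem_univ _, h⟩)
  obtain ⟨hMedge, hMdisj⟩ := hM
  set ν := M.card with hνdef
  set Vm : Finset (Finset V) := M.biUnion (fun p => {p.1, p.2}) with hVmdef
  have hVm_of : ∀ {C : Finset V} {p : Finset V × Finset V}, p ∈ M →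
      (C = p.1 ∨ C = p.2) → C ∈ Vm := by
    intro C p hp h
    refine Finset.mem_biUnion.2 ⟨p, hp, ?_⟩
    rcases h with rfl | rfl <;> simp
  have hVm_mem : ∀ {C : Finset V}, C ∈ Vm → ∃ p ∈ M, C = p.1 ∨ C = p.2 := by
    intro C hC
    obtain ⟨p, hp, hmem⟩ := Finset.mem_biUnion.1 hC
    refine ⟨p, hp, ?_⟩
    simpa using hmem
  have hend_uniq : ∀ p ∈ M, ∀ q ∈ M, ∀ C : Finset V,
      (C = p.1 ∨ C = p.2) → (C = q.1 ∨ C = q.2) → p = q := by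
    intro p hp q hq C h1 h2
    by_contra hpq
    obtain ⟨a, b, c, d⟩ := hMdisj p hp q hq hpq
    rcases h1 with h1 | h1 <;> rcases h2 with h2 | h2
    · exact a (h1.symm.trans h2)
    · exact b (h1.symm.trans h2)
    · exact c (h1.symm.trans h2)
    · exact d (h1.symm.trans h2)
  have hnotVm_ne : ∀ {C : Finset V}, C ∉ Vm → ∀ q ∈ M, C ≠ q.1 ∧ C ≠ q.2 := by
    intro C hC q hq
    exact ⟨fun h => hC (hVm_of hq (Or.inl h)), fun h => hC (hVm_of hq (Or.inr h))⟩
  -- ν ≥ 1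
  obtain ⟨C₁, hC₁⟩ := hΨne
  have hν1 : 1 ≤ ν := by
    obtain ⟨h1, h2, h3⟩ := hpf C₁ hC₁
    have hIsM1 : IsM {(C₁, pf C₁)} := by
      constructor
      · intro p hp
        simp only [Finset.mem_singleton] at hp
        subst hp
        exact ⟨hC₁, h1, h2.symm, h3.2.2.2⟩
      · intro p hp q hq hpq
        simp only [Finset.mem_singleton] at hp hq
        exact absurd (hp.trans hq.symm) hpq
    simpa using hmax _ hIsM1
  -- ν ≤ Δ
  obtain ⟨x₁, hx₁⟩ := hne C₁ hC₁
  have hνΔ : ν ≤ Δ := by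
    have h1 : M.card ≤ (Dw x₁).card := by
      apply Finset.card_le_card_of_injOn
        (fun p => if ∃ x ∈ p.1, G.Adj x₁ x then p.1 else p.2)
      · intro p hp
        obtain ⟨hp1, hp2, hp3, hp4⟩ := hMedge p hp
        by_cases h : ∃ x ∈ p.1, G.Adj x₁ x
        · simp only [Finset.mem_coe]; rw [if_pos h]; exact Finset.mem_filter.2 ⟨hp1, h⟩
        · simp only [Finset.mem_coe]; rw [if_neg h]
          obtain ⟨u, hu, hadj⟩ := hp4 x₁
          rcases Finset.mem_union.1 hu with h' | h'
          · exact absurd ⟨u, h', hadj⟩ h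
          · exact Finset.mem_filter.2 ⟨hp2, ⟨u, h', hadj⟩⟩
      · intro p hp q hq hEq
        have hp' : (if ∃ x ∈ p.1, G.Adj x₁ x then p.1 else p.2) = p.1 ∨
            (if ∃ x ∈ p.1, G.Adj x₁ x then p.1 else p.2) = p.2 := by
          by_cases h : ∃ x ∈ p.1, G.Adj x₁ x <;> simp [h]
        have hq' : (if ∃ x ∈ q.1, G.Adj x₁ x then q.1 else q.2) = q.1 ∨
            (if ∃ x ∈ q.1, G.Adj x₁ x then q.1 else q.2) = q.2 := by
          by_cases h : ∃ x ∈ q.1, G.Adj x₁ x <;> simp [h]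
        dsimp only at hEq
        rw [hEq] at hp'
        exact hend_uniq p hp q hq _ hp' hq'
    exact h1.trans (hDw_card x₁)
  -- every unmatched class has a matched partner
  have hswap1 : ∀ C ∈ Ψ, C ∉ Vm → pf C ∈ Vm := by
    intro C hC hCun
    by_contra hpfun
    obtain ⟨h1, h2, h3⟩ := hpf C hC
    have hnotmem : (C, pf C) ∉ M := by
      intro hmem
      exact hCun (hVm_of hmem (Or.inl rfl))
    have hIsM' : IsM (insert (C, pf C) M) := by
      constructor
      · intro p hp
        rcases Finset.mem_insert.1 hp with rfl | hp
        · exact ⟨hC, h1, h2.symm, h3.2.2.2⟩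
        · exact hMedge p hp
      · intro p hp q hq hpq
        rcases Finset.mem_insert.1 hp with rfl | hp <;>
          rcases Finset.mem_insert.1 hq with hq' | hq'
        · exact absurd hq'.symm hpq
        · exact ⟨(hnotVm_ne hCun q hq').1, (hnotVm_ne hCun q hq').2,
            (hnotVm_ne hpfun q hq').1, (hnotVm_ne hpfun q hq').2⟩
        · subst hq'
          exact ⟨((hnotVm_ne hCun p hp).1).symm, ((hnotVm_ne hpfun p hp).1).symm,
            ((hnotVm_ne hCun p hp).2).symm, ((hnotVm_ne hpfun p hp).2).symm⟩
        · exact hMdisj p hp q hq' hpq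
    have hcard : (insert (C, pf C) M).card = ν + 1 :=
      Finset.card_insert_of_notMem hnotmem
    have := hmax _ hIsM'
    omega
  -- swap lemma: two distinct unmatched classes cannot have distinct partners on one edge
  have hswap2 : ∀ p ∈ M, ∀ C C' : Finset V, C ∈ Ψ → C' ∈ Ψ → C ∉ Vm → C' ∉ Vm → C ≠ C' →
      (pf C = p.1 ∨ pf C = p.2) → (pf C' = p.1 ∨ pf C' = p.2) → pf C ≠ pf C' → False := by
    intro p hp C C' hC hC' hCu hC'u hCC' h1 h2 hne2
    obtain ⟨hc1, hc2, hc3⟩ := hpf C hC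
    obtain ⟨hc1', hc2', hc3'⟩ := hpf C' hC'
    have hC'notE : (C', pf C') ∉ M.erase p := by
      intro hmem
      exact hC'u (hVm_of (Finset.mem_of_mem_erase hmem) (Or.inl rfl))
    have hCnotI : (C, pf C) ∉ insert (C', pf C') (M.erase p) := by
      intro hmem
      rcases Finset.mem_insert.1 hmem with heq | hmem
      · exact hCC' (congrArg Prod.fst heq)
      · exact hCu (hVm_of (Finset.mem_of_mem_erase hmem) (Or.inl rfl))
    have hErase : ∀ q ∈ M.erase p, q ∈ M ∧ q ≠ p := fun q hq =>
      ⟨Finset.mem_of_mem_erase hq, Finset.ne_of_mem_erase hq⟩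
    -- an endpoint of p differs from endpoints of q ∈ M.erase p
    have hpfne : ∀ {D : Finset V}, (D = p.1 ∨ D = p.2) → ∀ q ∈ M.erase p,
        D ≠ q.1 ∧ D ≠ q.2 := by
      intro D hD q hq
      obtain ⟨hqM, hqp⟩ := hErase q hq
      constructor
      · intro h
        exact hqp (hend_uniq q hqM p hp D (Or.inl h) hD)
      · intro h
        exact hqp (hend_uniq q hqM p hp D (Or.inr h) hD)
    have hCend : C ≠ pf C' := by
      intro h; rw [h] at hCu; exact hCu (hVm_of hp h2)
    have hC'end : C' ≠ pf C := by
      intro h; rw [h] at hC'u; exact hC'u (hVm_of hp h1)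
    have hunm : ∀ {D : Finset V}, D ∉ Vm → ∀ q ∈ M.erase p, D ≠ q.1 ∧ D ≠ q.2 := by
      intro D hD q hq
      exact hnotVm_ne hD q (hErase q hq).1
    have hIsM' : IsM (insert (C, pf C) (insert (C', pf C') (M.erase p))) := by
      constructor
      · intro q hq
        rcases Finset.mem_insert.1 hq with rfl | hq
        · exact ⟨hC, hc1, hc2.symm, hc3.2.2.2⟩
        rcases Finset.mem_insert.1 hq with rfl | hq
        · exact ⟨hC', hc1', hc2'.symm, hc3'.2.2.2⟩
        · exact hMedge q (Finset.mem_of_mem_erase hq)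
      · intro q hq r hr hqr
        rcases Finset.mem_insert.1 hq with rfl | hq
        · -- q = (C, pf C)
          rcases Finset.mem_insert.1 hr with rfl | hr
          · exact absurd rfl hqr
          rcases Finset.mem_insert.1 hr with rfl | hr
          · exact ⟨hCC', hCend, hC'end.symm, hne2⟩
          · exact ⟨(hunm hCu r hr).1, (hunm hCu r hr).2,
              (hpfne h1 r hr).1, (hpfne h1 r hr).2⟩
        rcases Finset.mem_insert.1 hq with rfl | hq
        · -- q = (C', pf C')
          rcases Finset.mem_insert.1 hr with rfl | hr
          · exact ⟨hCC'.symm, hC'end, hCend.symm, hne2.symm⟩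
          rcases Finset.mem_insert.1 hr with rfl | hr
          · exact absurd rfl hqr
          · exact ⟨(hunm hC'u r hr).1, (hunm hC'u r hr).2,
              (hpfne h2 r hr).1, (hpfne h2 r hr).2⟩
        · -- q ∈ M.erase p
          rcases Finset.mem_insert.1 hr with rfl | hr
          · exact ⟨((hunm hCu q hq).1).symm, ((hpfne h1 q hq).1).symm,
              ((hunm hCu q hq).2).symm, ((hpfne h1 q hq).2).symm⟩
          rcases Finset.mem_insert.1 hr with rfl | hr
          · exact ⟨((hunm hC'u q hq).1).symm, ((hpfne h2 q hq).1).symm,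
              ((hunm hC'u q hq).2).symm, ((hpfne h2 q hq).2).symm⟩
          · exact hMdisj q (hErase q hq).1 r (hErase r hr).1 hqr
    have hcard : (insert (C, pf C) (insert (C', pf C') (M.erase p))).card = ν + 1 := by
      rw [Finset.card_insert_of_notMem hCnotI, Finset.card_insert_of_notMem hC'notE,
        Finset.card_erase_of_mem hp]
      omega
    have := hmax _ hIsM'
    omega
  -- the unmatched classes, grouped by the matching edge containing their partner
  set U : Finset (Finset V) := Ψ \ Vm with hUdef
  set Up : (Finset V × Finset V) → Finset (Finset V) :=
    fun p => U.filter (fun C => pf C = p.1 ∨ pf C = p.2) with hUpdef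
  have hUp_bound : ∀ p ∈ M, (Up p).card + ν ≤ Δ := by
    intro p hp
    rcases Finset.eq_empty_or_nonempty (Up p) with he | ⟨C₀, hC₀⟩
    · rw [he]; simpa using hνΔ
    have hC₀' := Finset.mem_filter.1 hC₀
    have hC₀Ψ : C₀ ∈ Ψ := (Finset.mem_sdiff.1 hC₀'.1).1
    have hC₀Vm : C₀ ∉ Vm := (Finset.mem_sdiff.1 hC₀'.1).2
    -- all classes in Up p have the same partner E
    have hconst : ∀ C ∈ Up p, pf C = pf C₀ := by
      intro C hC
      by_contra hne'
      have hC' := Finset.mem_filter.1 hC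
      have hCΨ : C ∈ Ψ := (Finset.mem_sdiff.1 hC'.1).1
      have hCVm : C ∉ Vm := (Finset.mem_sdiff.1 hC'.1).2
      have hCC₀ : C ≠ C₀ := by
        intro h; rw [h] at hne'; exact hne' rfl
      exact hswap2 p hp C C₀ hCΨ hC₀Ψ hCVm hC₀Vm hCC₀ hC'.2 hC₀'.2 hne'
    obtain ⟨hEΨ, hEC₀, hEco⟩ := hpf C₀ hC₀Ψ
    have hEnd : ¬ TotalDomSet G (pf C₀) := hnd _ hEΨ
    have hwex : ∃ w : V, ∀ u ∈ pf C₀, ¬ G.Adj w u := by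
      by_contra h
      push_neg at h
      exact hEnd (fun v => h v)
    obtain ⟨w, hw⟩ := hwex
    -- Up p is inside Dw w
    have hUpD : Up p ⊆ Dw w := by
      intro C hC
      have hC' := Finset.mem_filter.1 hC
      have hCΨ : C ∈ Ψ := (Finset.mem_sdiff.1 hC'.1).1
      have hco := (hpf C hCΨ).2.2
      have htds : TotalDomSet G (C ∪ pf C₀) := by
        rw [← hconst C hC]; exact hco.2.2.2
      obtain ⟨u, hu, hadj⟩ := htds w
      rcases Finset.mem_union.1 hu with h' | h'
      · exact Finset.mem_filter.2 ⟨hCΨ, u, h', hadj⟩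
      · exact absurd hadj (hw u h')
    -- the other endpoint E' of p is in Dw w
    obtain ⟨hp1, hp2, hp12, hptds⟩ := hMedge p hp
    set E' : Finset V := if pf C₀ = p.1 then p.2 else p.1 with hE'def
    have hE'end : E' = p.1 ∨ E' = p.2 := by
      by_cases h : pf C₀ = p.1 <;> simp [hE'def, h]
    have hE'D : E' ∈ Dw w := by
      obtain ⟨u, hu, hadj⟩ := hptds w
      have huE : u ∉ pf C₀ := fun h => hw u h hadj
      by_cases h : pf C₀ = p.1
      · have hE' : E' = p.2 := by simp [hE'def, h]
        rcases Finset.mem_union.1 hu with h' | h'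
        · exact absurd (h ▸ h') huE
        · rw [hE']; exact Finset.mem_filter.2 ⟨hp2, u, h', hadj⟩
      · have hE2 : pf C₀ = p.2 := by
          rcases hC₀'.2 with h' | h'
          · exact absurd h' h
          · exact h'
        have hE' : E' = p.1 := by simp [hE'def, h]
        rcases Finset.mem_union.1 hu with h' | h'
        · rw [hE']; exact Finset.mem_filter.2 ⟨hp1, u, h', hadj⟩
        · exact absurd (hE2 ▸ h') huE
    have hE'Vm : E' ∈ Vm := hVm_of hp hE'end
    -- one endpoint of every other matching edge is in Dw w
    set gq : Finset V × Finset V → Finset V :=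
      fun q => if ∃ x ∈ q.1, G.Adj w x then q.1 else q.2 with hgqdef
    have hgq_end : ∀ q : Finset V × Finset V, gq q = q.1 ∨ gq q = q.2 := by
      intro q
      by_cases h : ∃ x ∈ q.1, G.Adj w x <;> simp [hgqdef, h]
    have hgq_mem : ∀ q ∈ M, gq q ∈ Dw w := by
      intro q hq
      obtain ⟨hq1, hq2, hq12, hqtds⟩ := hMedge q hq
      by_cases h : ∃ x ∈ q.1, G.Adj w x
      · simp only [hgqdef, if_pos h]
        exact Finset.mem_filter.2 ⟨hq1, h⟩
      · simp only [hgqdef, if_neg h]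
        obtain ⟨u, hu, hadj⟩ := hqtds w
        rcases Finset.mem_union.1 hu with h' | h'
        · exact absurd ⟨u, h', hadj⟩ h
        · exact Finset.mem_filter.2 ⟨hq2, u, h', hadj⟩
    set T : Finset (Finset V) := (M.erase p).image gq with hTdef
    have hTD : T ⊆ Dw w := by
      intro x hx
      obtain ⟨q, hq, rfl⟩ := Finset.mem_image.1 hx
      exact hgq_mem q (Finset.mem_of_mem_erase hq)
    have hTcard : T.card = ν - 1 := by
      rw [hTdef, Finset.card_image_of_injOn, Finset.card_erase_of_mem hp]
      intro q hq q' hq' hEq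
      simp only [Finset.mem_coe] at hq hq'
      have h1 := hgq_end q
      have h2 := hgq_end q'
      rw [hEq] at h1
      exact hend_uniq q (Finset.mem_of_mem_erase hq) q' (Finset.mem_of_mem_erase hq') _ h1 h2
    -- disjointness of the three pieces
    have hdisj1 : Disjoint (Up p) {E'} := by
      rw [Finset.disjoint_singleton_right]
      intro h
      have := (Finset.mem_sdiff.1 (Finset.mem_filter.1 h).1).2
      exact this hE'Vm
    have hdisj2 : Disjoint (Up p ∪ {E'}) T := by
      rw [Finset.disjoint_left]
      intro x hx hxT
      obtain ⟨q, hq, rfl⟩ := Finset.mem_image.1 hxT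
      have hqM := Finset.mem_of_mem_erase hq
      have hqp := Finset.ne_of_mem_erase hq
      rcases Finset.mem_union.1 hx with hx' | hx'
      · -- gq q is matched but Up p is unmatched
        have := (Finset.mem_sdiff.1 (Finset.mem_filter.1 hx').1).2
        exact this (hVm_of hqM (hgq_end q))
      · -- gq q = E' would make p = q
        rw [Finset.mem_singleton] at hx'
        have h1 : E' = q.1 ∨ E' = q.2 := by rw [← hx']; exact hgq_end q
        exact hqp (hend_uniq q hqM p hp E' h1 hE'end)
    have hsub : (Up p ∪ {E'}) ∪ T ⊆ Dw w := by
      intro x hx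
      rcases Finset.mem_union.1 hx with hx' | hx'
      · rcases Finset.mem_union.1 hx' with hx'' | hx''
        · exact hUpD hx''
        · rw [Finset.mem_singleton] at hx''; rw [hx'']; exact hE'D
      · exact hTD hx'
    have hcards : (Up p).card + 1 + (ν - 1) ≤ Δ := by
      have h1 : ((Up p ∪ {E'}) ∪ T).card = (Up p).card + 1 + (ν - 1) := by
        rw [Finset.card_union_of_disjoint hdisj2, Finset.card_union_of_disjoint hdisj1,
          Finset.card_singleton, hTcard]
      calc (Up p).card + 1 + (ν - 1) = ((Up p ∪ {E'}) ∪ T).card := h1.symm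
        _ ≤ (Dw w).card := Finset.card_le_card hsub
        _ ≤ Δ := hDw_card w
    omega
  -- assembling
  have hVm_sub : Vm ⊆ Ψ := by
    intro C hC
    obtain ⟨p, hp, h⟩ := hVm_mem hC
    rcases h with rfl | rfl
    · exact (hMedge p hp).1
    · exact (hMedge p hp).2.1
  have hVm_card : Vm.card = 2 * ν := by
    rw [hVmdef, Finset.card_biUnion]
    · rw [Finset.sum_congr rfl (fun p hp => ?_), Finset.sum_const, smul_eq_mul, Nat.mul_comm]
      have h12 := (hMedge p hp).2.2.1
      rw [Finset.card_insert_of_notMem (by simpa using h12), Finset.card_singleton]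
    · intro p hp q hq hpq
      simp only [Function.onFun]
      rw [Finset.disjoint_left]
      intro x hx hx'
      have h1 : x = p.1 ∨ x = p.2 := by simpa using hx
      have h2 : x = q.1 ∨ x = q.2 := by simpa using hx'
      exact hpq (hend_uniq p hp q hq x h1 h2)
  have hU_sub : U ⊆ M.biUnion Up := by
    intro C hC
    have hCΨ : C ∈ Ψ := (Finset.mem_sdiff.1 hC).1
    have hCVm : C ∉ Vm := (Finset.mem_sdiff.1 hC).2
    obtain ⟨p, hp, hpe⟩ := hVm_mem (hswap1 C hCΨ hCVm)
    exact Finset.mem_biUnion.2 ⟨p, hp, Finset.mem_filter.2 ⟨hC, hpe⟩⟩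
  have hU_card : U.card ≤ ν * (Δ - ν) := by
    calc U.card ≤ (M.biUnion Up).card := Finset.card_le_card hU_sub
      _ ≤ ∑ p ∈ M, (Up p).card := Finset.card_biUnion_le
      _ ≤ ∑ p ∈ M, (Δ - ν) := Finset.sum_le_sum (fun p hp => by
          have := hUp_bound p hp; omega)
      _ = ν * (Δ - ν) := by rw [Finset.sum_const, smul_eq_mul]
  have htotal : Ψ.card ≤ 2 * ν + ν * (Δ - ν) := by
    have h1 : Ψ.card = U.card + Vm.card := (Finset.card_sdiff_add_card_eq_card hVm_sub).symm
    rw [h1, hVm_card, Nat.add_comm]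
    exact Nat.add_le_add_left hU_card _
  -- arithmetic conclusion
  obtain ⟨t, ht⟩ := hodd
  have hgoal : (Δ + 1) * (Δ + 3) / 4 = (t + 1) * (t + 2) := by
    have h1 : (Δ + 1) * (Δ + 3) = (t + 1) * (t + 2) * 4 := by rw [ht]; ring
    rw [h1]
    exact Nat.mul_div_cancel _ (by norm_num)
  rw [hgoal]
  have hkey : ∀ a b : ℤ, 0 ≤ a → 0 ≤ b → a + b = 2 * t + 1 →
      2 * a + a * b ≤ (t + 1) * (t + 2) := by
    intro a b ha hb hab
    nlinarith [mul_self_nonneg (a - (t + 1)), mul_self_nonneg (a - (t + 2))]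
  have hfin : 2 * ν + ν * (Δ - ν) ≤ (t + 1) * (t + 2) := by
    have hb : ν + (Δ - ν) = Δ := Nat.add_sub_cancel' hνΔ
    have h3 : (ν : ℤ) + ((Δ - ν : ℕ) : ℤ) = 2 * (t : ℤ) + 1 := by
      have h4 : ((ν : ℕ) : ℤ) + ((Δ - ν : ℕ) : ℤ) = ((Δ : ℕ) : ℤ) := by
        exact_mod_cast congrArg (fun n : ℕ => (n : ℤ)) hb
      rw [h4]
      exact_mod_cast ht
    have h2 := hkey (ν : ℤ) ((Δ - ν : ℕ) : ℤ) (Int.natCast_nonneg _) (Int.natCast_nonneg _) h3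
    exact_mod_cast h2
  exact htotal.trans hfin
end

section
/- Let G be a finite simple isolate-free graph with maximum degree Δ = Δ(G), let Ψ be a total coalition partition of G, and suppose the maximum size of a matching in the total coalition graph TCG(G,Ψ) equals m. Then the number of classes of Ψ satisfies |Ψ| ≤ m(Δ − m + 2). -/
open scoped Classical

variable {V : Type*}

/-- The total coalition graph `TCG(G,Ψ)` has a matching of size `m`: there are `2m`
pairwise distinct classes `A i`, `B i` of `Ψ` such that `A i` and `B i` form a total
coalition for each `i`. -/
def HasMatchingOfSize [DecidableEq V] (G : SimpleGraph V) (Ψ : Finset (Finset V))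
    (m : ℕ) : Prop :=
  ∃ A B : Fin m → Finset V,
    (∀ i, A i ∈ Ψ) ∧ (∀ i, B i ∈ Ψ) ∧
    Function.Injective (Sum.elim A B) ∧
    ∀ i, TotalCoalition G (A i) (B i)


open scoped Classical

section Aux
variable {α : Type*}

private lemma elim_snoc_inj {m : ℕ} {A B : Fin m → α} {X Y : α}
    (h : Function.Injective (Sum.elim A B))
    (hX : ∀ s, Sum.elim A B s ≠ X) (hY : ∀ s, Sum.elim A B s ≠ Y) (hXY : X ≠ Y) :
    Function.Injective (Sum.elim (Fin.snoc A X) (Fin.snoc B Y)) := by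
  have hA : ∀ k l, A k = A l → k = l := fun k l e => by
    have := h (a₁ := Sum.inl k) (a₂ := Sum.inl l) e; simpa using this
  have hB : ∀ k l, B k = B l → k = l := fun k l e => by
    have := h (a₁ := Sum.inr k) (a₂ := Sum.inr l) e; simpa using this
  have hAB : ∀ k l, A k ≠ B l := fun k l e => by
    have := h (a₁ := Sum.inl k) (a₂ := Sum.inr l) e; simpa using this
  rintro (i | i) (i' | i') hst
  · rcases Fin.eq_castSucc_or_eq_last i with ⟨j, rfl⟩ | rfl <;>
      rcases Fin.eq_castSucc_or_eq_last i' with ⟨j', rfl⟩ | rfl <;>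
      simp only [Sum.elim_inl, Fin.snoc_castSucc, Fin.snoc_last] at hst
    · rw [hA _ _ hst]
    · exact absurd hst (hX (Sum.inl j))
    · exact absurd hst.symm (hX (Sum.inl j'))
    · rfl
  · exfalso
    rcases Fin.eq_castSucc_or_eq_last i with ⟨j, rfl⟩ | rfl <;>
      rcases Fin.eq_castSucc_or_eq_last i' with ⟨j', rfl⟩ | rfl <;>
      simp only [Sum.elim_inl, Sum.elim_inr, Fin.snoc_castSucc, Fin.snoc_last] at hst
    · exact hAB _ _ hst
    · exact hY (Sum.inl j) hst
    · exact hX (Sum.inr j') hst.symm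
    · exact hXY hst
  · exfalso
    rcases Fin.eq_castSucc_or_eq_last i with ⟨j, rfl⟩ | rfl <;>
      rcases Fin.eq_castSucc_or_eq_last i' with ⟨j', rfl⟩ | rfl <;>
      simp only [Sum.elim_inl, Sum.elim_inr, Fin.snoc_castSucc, Fin.snoc_last] at hst
    · exact hAB _ _ hst.symm
    · exact hX (Sum.inr j) hst
    · exact hY (Sum.inl j') hst.symm
    · exact hXY hst.symm
  · rcases Fin.eq_castSucc_or_eq_last i with ⟨j, rfl⟩ | rfl <;>
      rcases Fin.eq_castSucc_or_eq_last i' with ⟨j', rfl⟩ | rfl <;>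
      simp only [Sum.elim_inr, Fin.snoc_castSucc, Fin.snoc_last] at hst
    · rw [hB _ _ hst]
    · exact absurd hst (hY (Sum.inr j))
    · exact absurd hst.symm (hY (Sum.inr j'))
    · rfl

private lemma elim_update_inj {m : ℕ} {A B : Fin m → α}
    (h : Function.Injective (Sum.elim A B)) (j : Fin m) {C : α}
    (hC : ∀ s, Sum.elim A B s ≠ C) :
    Function.Injective (Sum.elim (Function.update A j C) (Function.update B j (A j))) := by
  have hA : ∀ k l, A k = A l → k = l := fun k l e => by
    have := h (a₁ := Sum.inl k) (a₂ := Sum.inl l) e; simpa using this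
  have hB : ∀ k l, B k = B l → k = l := fun k l e => by
    have := h (a₁ := Sum.inr k) (a₂ := Sum.inr l) e; simpa using this
  have hAB : ∀ k l, A k ≠ B l := fun k l e => by
    have := h (a₁ := Sum.inl k) (a₂ := Sum.inr l) e; simpa using this
  rintro (i | i) (i' | i') hst <;>
    simp only [Sum.elim_inl, Sum.elim_inr] at hst
  · by_cases hi : i = j <;> by_cases hi' : i' = j
    · rw [hi, hi']
    · rw [hi, Function.update_self, Function.update_of_ne hi'] at hst
      exact absurd hst.symm (hC (Sum.inl i'))
    · rw [hi', Function.update_self, Function.update_of_ne hi] at hst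
      exact absurd hst (hC (Sum.inl i))
    · rw [Function.update_of_ne hi, Function.update_of_ne hi'] at hst
      rw [hA _ _ hst]
  · exfalso
    by_cases hi : i = j <;> by_cases hi' : i' = j
    · rw [hi, hi', Function.update_self, Function.update_self] at hst
      exact hC (Sum.inl j) hst.symm
    · rw [hi, Function.update_self, Function.update_of_ne hi'] at hst
      exact hC (Sum.inr i') hst.symm
    · rw [hi', Function.update_self, Function.update_of_ne hi] at hst
      exact hi (hA _ _ hst)
    · rw [Function.update_of_ne hi, Function.update_of_ne hi'] at hst
      exact hAB _ _ hst
  · exfalso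
    by_cases hi : i = j <;> by_cases hi' : i' = j
    · rw [hi, hi', Function.update_self, Function.update_self] at hst
      exact hC (Sum.inl j) hst
    · rw [hi, Function.update_self, Function.update_of_ne hi'] at hst
      exact hi' (hA _ _ hst.symm)
    · rw [hi', Function.update_self, Function.update_of_ne hi] at hst
      exact hC (Sum.inr i) hst
    · rw [Function.update_of_ne hi, Function.update_of_ne hi'] at hst
      exact hAB _ _ hst.symm
  · by_cases hi : i = j <;> by_cases hi' : i' = j
    · rw [hi, hi']
    · exfalso
      rw [hi, Function.update_self, Function.update_of_ne hi'] at hst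
      exact hAB _ _ hst
    · exfalso
      rw [hi', Function.update_self, Function.update_of_ne hi] at hst
      exact hAB _ _ hst.symm
    · rw [Function.update_of_ne hi, Function.update_of_ne hi'] at hst
      rw [hB _ _ hst]

private lemma elim_update_range {m : ℕ} {A B : Fin m → α} (j : Fin m) (C : α)
    (s : Sum (Fin m) (Fin m)) :
    Sum.elim (Function.update A j C) (Function.update B j (A j)) s = C ∨
    ∃ t, t ≠ Sum.inr j ∧
      Sum.elim (Function.update A j C) (Function.update B j (A j)) s = Sum.elim A B t := by
  rcases s with i | i
  · by_cases hi : i = j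
    · left; rw [hi]; simp
    · right; exact ⟨Sum.inl i, by simp, by simp [Function.update_of_ne hi]⟩
  · by_cases hi : i = j
    · right; exact ⟨Sum.inl j, by simp, by rw [hi]; simp⟩
    · right; exact ⟨Sum.inr i, by simp [hi], by simp [Function.update_of_ne hi]⟩

end Aux
/-- If the maximum matching size of the total coalition graph `TCG(G,Ψ)` is `m`, then
the number of classes of `Ψ` is at most `m(Δ(G) − m + 2)`. -/
theorem statement_10 [Fintype V] [DecidableEq V]
    (G : SimpleGraph V) [DecidableRel G.Adj] (hG : IsolateFree G)
    (Ψ : Finset (Finset V)) (hΨ : IsTCPartition G Ψ)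
    (m : ℕ) (hm : HasMatchingOfSize G Ψ m)
    (hmax : ∀ m', HasMatchingOfSize G Ψ m' → m' ≤ m) :
    (Ψ.card : ℤ) ≤ (m : ℤ) * ((G.maxDegree : ℤ) - (m : ℤ) + 2) := by
  classical
  obtain ⟨hnecl, huniq, hnd, hpart⟩ := hΨ
  obtain ⟨A, B, hAmem, hBmem, hinj, hcoal⟩ := hm
  have hA : ∀ k l, A k = A l → k = l := fun k l e => by
    have := hinj (a₁ := Sum.inl k) (a₂ := Sum.inl l) e; simpa using this
  have hB : ∀ k l, B k = B l → k = l := fun k l e => by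
    have := hinj (a₁ := Sum.inr k) (a₂ := Sum.inr l) e; simpa using this
  have hABne : ∀ k l, A k ≠ B l := fun k l e => by
    have := hinj (a₁ := Sum.inl k) (a₂ := Sum.inr l) e; simpa using this
  have class_eq : ∀ {C D : Finset V} {x : V}, C ∈ Ψ → D ∈ Ψ → x ∈ C → x ∈ D → C = D := by
    intro C D x hC hD hxC hxD
    obtain ⟨E, -, hE⟩ := huniq x
    exact (hE C ⟨hC, hxC⟩).trans (hE D ⟨hD, hxD⟩).symm
  have tcsymm : ∀ {X Y : Finset V}, TotalCoalition G X Y → TotalCoalition G Y X := by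
    rintro X Y ⟨hd, h1, h2, h3⟩
    exact ⟨hd.symm, h2, h1, by rwa [Finset.union_comm]⟩
  set matched : Finset (Finset V) := Finset.image (Sum.elim A B) Finset.univ with hmdef
  have hmem_matched : ∀ s, Sum.elim A B s ∈ matched := fun s =>
    Finset.mem_image.2 ⟨s, Finset.mem_univ s, rfl⟩
  have hnotm : ∀ {C}, C ∉ matched → ∀ s, Sum.elim A B s ≠ C := by
    intro C hC s hs
    exact hC (hs ▸ hmem_matched s)
  -- augmentation, case (i): two unmatched classes in total coalition
  have aug1 : ∀ C D : Finset V, C ∈ Ψ → D ∈ Ψ → C ∉ matched → D ∉ matched → C ≠ D →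
      TotalCoalition G C D → False := by
    intro C D hCΨ hDΨ hCm hDm hCD hcd
    have hbig : HasMatchingOfSize G Ψ (m + 1) := by
      refine ⟨Fin.snoc A C, Fin.snoc B D, ?_, ?_, ?_, ?_⟩
      · intro i
        rcases Fin.eq_castSucc_or_eq_last i with ⟨j, rfl⟩ | rfl
        · simpa using hAmem j
        · simpa using hCΨ
      · intro i
        rcases Fin.eq_castSucc_or_eq_last i with ⟨j, rfl⟩ | rfl
        · simpa using hBmem j
        · simpa using hDΨ
      · exact elim_snoc_inj hinj (hnotm hCm) (hnotm hDm) hCD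
      · intro i
        rcases Fin.eq_castSucc_or_eq_last i with ⟨j, rfl⟩ | rfl
        · simpa using hcoal j
        · simpa using hcd
    have := hmax _ hbig
    omega
  -- augmentation, case (ii): two unmatched classes attached to the two ends of a matching edge
  have aug2 : ∀ (j : Fin m) (C C' : Finset V), C ∈ Ψ → C' ∈ Ψ → C ∉ matched → C' ∉ matched →
      C ≠ C' → TotalCoalition G (A j) C → TotalCoalition G (B j) C' → False := by
    intro j C C' hCΨ hC'Ψ hCm hC'm hCC' hc1 hc2
    have hCrange := hnotm hCm
    have hC'range := hnotm hC'm
    have hrange : ∀ s, Sum.elim (Function.update A j C) (Function.update B j (A j)) s ≠ B j := by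
      intro s hs
      rcases elim_update_range j C s with h | ⟨t, ht, h⟩
      · exact hCrange (Sum.inr j) (h.symm.trans hs).symm
      · have : Sum.inr j = t := hinj (a₁ := Sum.inr j) (a₂ := t) (h.symm.trans hs).symm
        exact ht this.symm
    have hrange' : ∀ s,
        Sum.elim (Function.update A j C) (Function.update B j (A j)) s ≠ C' := by
      intro s hs
      rcases elim_update_range j C s with h | ⟨t, ht, h⟩
      · exact hCC' (h.symm.trans hs)
      · exact hC'range t (h.symm.trans hs)
    have hbig : HasMatchingOfSize G Ψ (m + 1) := by
      refine ⟨Fin.snoc (Function.update A j C) (B j), Fin.snoc (Function.update B j (A j)) C',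
        ?_, ?_, ?_, ?_⟩
      · intro i
        rcases Fin.eq_castSucc_or_eq_last i with ⟨k, rfl⟩ | rfl
        · rw [Fin.snoc_castSucc]
          by_cases hk : k = j
          · rw [hk, Function.update_self]; exact hCΨ
          · rw [Function.update_of_ne hk]; exact hAmem k
        · rw [Fin.snoc_last]; exact hBmem j
      · intro i
        rcases Fin.eq_castSucc_or_eq_last i with ⟨k, rfl⟩ | rfl
        · rw [Fin.snoc_castSucc]
          by_cases hk : k = j
          · rw [hk, Function.update_self]; exact hAmem j
          · rw [Function.update_of_ne hk]; exact hBmem k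
        · rw [Fin.snoc_last]; exact hC'Ψ
      · exact elim_snoc_inj (elim_update_inj hinj j hCrange) hrange hrange'
          (hC'range (Sum.inr j))
      · intro i
        rcases Fin.eq_castSucc_or_eq_last i with ⟨k, rfl⟩ | rfl
        · rw [Fin.snoc_castSucc, Fin.snoc_castSucc]
          by_cases hk : k = j
          · rw [hk, Function.update_self, Function.update_self]
            exact tcsymm hc1
          · rw [Function.update_of_ne hk, Function.update_of_ne hk]
            exact hcoal k
        · rw [Fin.snoc_last, Fin.snoc_last]; exact hc2
    have := hmax _ hbig
    omega
  -- the degree-type bound: an undominated class has at most Δ - m unmatched coalition partners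
  have key : ∀ X : Finset V, ¬ TotalDomSet G X →
      (Ψ.filter fun C => C ∉ matched ∧ TotalCoalition G X C).card + m ≤ G.maxDegree := by
    intro X hX
    rw [TotalDomSet] at hX
    push_neg at hX
    obtain ⟨v, hv⟩ := hX
    set N := G.neighborFinset v with hNdef
    have hNle : N.card ≤ G.maxDegree := G.degree_le_maxDegree v
    set T := Ψ.filter (fun C => (C ∩ N).Nonempty) with hTdef
    have pickmem : ∀ C ∈ T, (C ∩ N).Nonempty := fun C hC => (Finset.mem_filter.1 hC).2
    have hTcard : T.card ≤ N.card := by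
      apply Finset.card_le_card_of_injOn (fun C => if h : (C ∩ N).Nonempty then h.choose else v)
      · intro C hC
        have h := pickmem C hC
        dsimp only
        rw [dif_pos h]
        exact (Finset.mem_inter.1 h.choose_spec).2
      · intro C₁ h₁ C₂ h₂ he
        have h₁' := Finset.mem_coe.1 h₁
        have h₂' := Finset.mem_coe.1 h₂
        have hc1 := pickmem C₁ h₁'
        have hc2 := pickmem C₂ h₂'
        dsimp only at he
        rw [dif_pos hc1, dif_pos hc2] at he
        have m1 := Finset.mem_inter.1 hc1.choose_spec
        have m2 := Finset.mem_inter.1 hc2.choose_spec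
        have hx2 : hc1.choose ∈ C₂ := by rw [he]; exact m2.1
        exact class_eq (Finset.mem_filter.1 h₁').1 (Finset.mem_filter.1 h₂').1 m1.1 hx2
    have hBN : ∀ k, ¬ (A k ∩ N).Nonempty → (B k ∩ N).Nonempty := by
      intro k hk
      obtain ⟨u, hu, hadj⟩ := (hcoal k).2.2.2 v
      have huN : u ∈ N := by rw [hNdef, SimpleGraph.mem_neighborFinset]; exact hadj
      rcases Finset.mem_union.1 hu with h | h
      · exact absurd ⟨u, Finset.mem_inter.2 ⟨h, huN⟩⟩ hk
      · exact ⟨u, Finset.mem_inter.2 ⟨h, huN⟩⟩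
    set P := Finset.image (fun k => if (A k ∩ N).Nonempty then A k else B k) Finset.univ
      with hPdef
    have hPT : P ⊆ T := by
      intro C hC
      obtain ⟨k, -, hk⟩ := Finset.mem_image.1 hC
      by_cases h : (A k ∩ N).Nonempty
      · rw [if_pos h] at hk
        exact Finset.mem_filter.2 ⟨hk ▸ hAmem k, hk ▸ h⟩
      · rw [if_neg h] at hk
        exact Finset.mem_filter.2 ⟨hk ▸ hBmem k, hk ▸ hBN k h⟩
    have hPcard : P.card = m := by
      rw [hPdef, Finset.card_image_of_injective _ ?_, Finset.card_univ, Fintype.card_fin]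
      intro k l h
      dsimp at h
      split_ifs at h with h1 h2 h2
      · exact hA _ _ h
      · exact absurd h (hABne k l)
      · exact absurd h.symm (hABne l k)
      · exact hB _ _ h
    have hSubT : (Ψ.filter fun C => C ∉ matched ∧ TotalCoalition G X C) ⊆ T := by
      intro C hC
      obtain ⟨hCΨ, -, hcoalC⟩ := Finset.mem_filter.1 hC
      obtain ⟨u, hu, hadj⟩ := hcoalC.2.2.2 v
      have huN : u ∈ N := by rw [hNdef, SimpleGraph.mem_neighborFinset]; exact hadj
      rcases Finset.mem_union.1 hu with h | h
      · exact absurd hadj (hv u h)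
      · exact Finset.mem_filter.2 ⟨hCΨ, ⟨u, Finset.mem_inter.2 ⟨h, huN⟩⟩⟩
    have hdisj : Disjoint (Ψ.filter fun C => C ∉ matched ∧ TotalCoalition G X C) P := by
      rw [Finset.disjoint_left]
      intro C hC hCP
      obtain ⟨k, -, hk⟩ := Finset.mem_image.1 hCP
      have hnm := (Finset.mem_filter.1 hC).2.1
      apply hnm
      by_cases h : (A k ∩ N).Nonempty
      · rw [if_pos h] at hk
        exact hk ▸ hmem_matched (Sum.inl k)
      · rw [if_neg h] at hk
        exact hk ▸ hmem_matched (Sum.inr k)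
    calc (Ψ.filter fun C => C ∉ matched ∧ TotalCoalition G X C).card + m
        = ((Ψ.filter fun C => C ∉ matched ∧ TotalCoalition G X C) ∪ P).card := by
          rw [Finset.card_union_of_disjoint hdisj, hPcard]
      _ ≤ T.card := Finset.card_le_card (Finset.union_subset hSubT hPT)
      _ ≤ N.card := hTcard
      _ ≤ G.maxDegree := hNle
  -- the per-edge unmatched sets
  set U : Fin m → Finset (Finset V) := fun j =>
    (Ψ.filter fun C => C ∉ matched ∧ TotalCoalition G (A j) C) ∪
    (Ψ.filter fun C => C ∉ matched ∧ TotalCoalition G (B j) C) with hUdef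
  have hUcard : ∀ j, (U j).card + m ≤ G.maxDegree := by
    intro j
    by_cases hE : (Ψ.filter fun C => C ∉ matched ∧ TotalCoalition G (B j) C) = ∅
    · have : U j = Ψ.filter fun C => C ∉ matched ∧ TotalCoalition G (A j) C := by
        rw [hUdef]; dsimp only; rw [hE, Finset.union_empty]
      rw [this]
      exact key (A j) (hcoal j).2.1
    · obtain ⟨C', hC'⟩ := Finset.nonempty_iff_ne_empty.2 hE
      obtain ⟨hC'Ψ, hC'm, hC'c⟩ := Finset.mem_filter.1 hC'
      have hsub : U j ⊆ Ψ.filter fun C => C ∉ matched ∧ TotalCoalition G (B j) C := by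
        apply Finset.union_subset _ Finset.Subset.rfl
        intro C hC
        obtain ⟨hCΨ, hCm, hCc⟩ := Finset.mem_filter.1 hC
        by_cases hCC' : C = C'
        · rw [hCC']; exact hC'
        · exact absurd (aug2 j C C' hCΨ hC'Ψ hCm hC'm hCC' hCc hC'c) not_false
      calc (U j).card + m
          ≤ (Ψ.filter fun C => C ∉ matched ∧ TotalCoalition G (B j) C).card + m := by
            have := Finset.card_le_card hsub; omega
        _ ≤ G.maxDegree := key (B j) (hcoal j).2.2.1
  -- every unmatched class lies in some U j
  have hcover : ∀ C ∈ Ψ, C ∉ matched → ∃ j : Fin m, C ∈ U j := by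
    intro C hCΨ hCm
    obtain ⟨D, hDΨ, hDC, hcd⟩ := hpart C hCΨ
    by_cases hDm : D ∈ matched
    · obtain ⟨s, -, hs⟩ := Finset.mem_image.1 hDm
      rcases s with j | j
      · refine ⟨j, Finset.mem_union_left _ (Finset.mem_filter.2 ⟨hCΨ, hCm, ?_⟩)⟩
        have : A j = D := hs
        rw [this]
        exact tcsymm hcd
      · refine ⟨j, Finset.mem_union_right _ (Finset.mem_filter.2 ⟨hCΨ, hCm, ?_⟩)⟩
        have : B j = D := hs
        rw [this]
        exact tcsymm hcd
    · exact absurd (aug1 C D hCΨ hDΨ hCm hDm (Ne.symm hDC) hcd) not_false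
  -- counting
  have hmsub : matched ⊆ Ψ := by
    intro C hC
    obtain ⟨s, -, hs⟩ := Finset.mem_image.1 hC
    rcases s with k | k
    · exact hs ▸ hAmem k
    · exact hs ▸ hBmem k
  have hmcard : matched.card = 2 * m := by
    rw [hmdef, Finset.card_image_of_injective _ hinj, Finset.card_univ]
    simp [Fintype.card_sum]
    omega
  have hcards : (Ψ \ matched).card + matched.card = Ψ.card :=
    Finset.card_sdiff_add_card_eq_card hmsub
  have hsdsub : Ψ \ matched ⊆ Finset.univ.biUnion U := by
    intro C hC
    obtain ⟨hCΨ, hCm⟩ := Finset.mem_sdiff.1 hC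
    obtain ⟨j, hj⟩ := hcover C hCΨ hCm
    exact Finset.mem_biUnion.2 ⟨j, Finset.mem_univ j, hj⟩
  have hsum : (Ψ \ matched).card ≤ ∑ j : Fin m, (U j).card :=
    le_trans (Finset.card_le_card hsdsub) Finset.card_biUnion_le
  have hsum2 : (∑ j : Fin m, (U j).card) + m * m ≤ m * G.maxDegree := by
    have : ∑ j : Fin m, ((U j).card + m) ≤ ∑ _j : Fin m, G.maxDegree :=
      Finset.sum_le_sum fun j _ => hUcard j
    rw [Finset.sum_add_distrib, Finset.sum_const, Finset.sum_const, Finset.card_univ,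
      Fintype.card_fin, smul_eq_mul, smul_eq_mul] at this
    omega
  have h1 : ((Ψ \ matched).card : ℤ) + m * m ≤ m * G.maxDegree := by
    have := le_trans (Nat.add_le_add_right hsum (m * m)) hsum2
    exact_mod_cast this
  have h2 : (Ψ.card : ℤ) = ((Ψ \ matched).card : ℤ) + 2 * m := by
    rw [← hcards, hmcard]; push_cast; ring
  rw [h2]
  nlinarith [h1]
end

section
/- Let G be a finite simple isolate-free graph with minimum degree δ(G), and let Ψ be a total coalition partition of G. If A₁,B₁,…,A_m,B_m are 2m pairwise distinct classes of Ψ such that A_i and B_i form a total coalition for each i (i.e., these pairs form a matching of size m in the total coalition graph TCG(G,Ψ)), then m ≤ δ(G). -/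
open scoped Classical

variable {V : Type*}

/-- If `2m` pairwise distinct classes of a total coalition partition form `m` total
coalition pairs (a matching of size `m` in `TCG(G,Ψ)`), then `m ≤ δ(G)`. -/
theorem statement_11 [Fintype V] [DecidableEq V]
    (G : SimpleGraph V) [DecidableRel G.Adj] (hG : IsolateFree G)
    (Ψ : Finset (Finset V)) (hΨ : IsTCPartition G Ψ)
    (m : ℕ) (A B : Fin m → Finset V)
    (hA : ∀ i, A i ∈ Ψ) (hB : ∀ i, B i ∈ Ψ)
    (hinj : Function.Injective (Sum.elim A B))
    (hcoal : ∀ i, TotalCoalition G (A i) (B i)) :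
    m ≤ G.minDegree := by
  rcases Nat.eq_zero_or_pos m with hm | hm
  · omega
  -- V is nonempty
  have hV : Nonempty V := by
    obtain ⟨x, _⟩ := hΨ.1 _ (hA ⟨0, hm⟩)
    exact ⟨x⟩
  obtain ⟨v, hv⟩ := G.exists_minimal_degree_vertex
  rw [hv, ← G.card_neighborFinset_eq_degree]
  -- distinct classes of Ψ are disjoint
  have hdisj : ∀ C ∈ Ψ, ∀ D ∈ Ψ, ∀ u : V, u ∈ C → u ∈ D → C = D := by
    intro C hC D hD u huC huD
    obtain ⟨E, _, hE⟩ := hΨ.2.1 u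
    rw [hE C ⟨hC, huC⟩, hE D ⟨hD, huD⟩]
  -- choose a neighbor of v in each A i ∪ B i
  have hpick : ∀ i : Fin m, ∃ u ∈ A i ∪ B i, G.Adj v u := fun i => (hcoal i).2.2.2 v
  choose f hf hadj using hpick
  have : (Finset.univ : Finset (Fin m)).card ≤ (G.neighborFinset v).card := by
    apply Finset.card_le_card_of_injOn f
    · intro i _
      rw [Finset.mem_coe, SimpleGraph.mem_neighborFinset]
      exact hadj i
    · intro i _ j _ hij
      by_contra hne
      have hfi := hf i
      have hfj := hf j
      rw [hij] at hfi
      rw [Finset.mem_union] at hfi hfj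
      rcases hfi with h1 | h1 <;> rcases hfj with h2 | h2
      · exact hne (Sum.inl_injective (hinj (by
          simpa using hdisj _ (hA i) _ (hA j) _ h1 h2)))
      · exact Sum.inl_ne_inr (hinj (show Sum.elim A B (Sum.inl i) = Sum.elim A B (Sum.inr j) by
          simpa using hdisj _ (hA i) _ (hB j) _ h1 h2))
      · exact Sum.inr_ne_inl (hinj (show Sum.elim A B (Sum.inr i) = Sum.elim A B (Sum.inl j) by
          simpa using hdisj _ (hB i) _ (hA j) _ h1 h2))
      · exact hne (Sum.inr_injective (hinj (by
          simpa using hdisj _ (hB i) _ (hB j) _ h1 h2)))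
  simpa using this
end
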